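/- arXiv:1904.13301 — 2 statements merged into one kernel-verified Lean document; each statement's English description precedes it below -/
import Mathlib

section
/- Let {H_α⁺}_{α∈𝒜} be a finite family of closed affine halfspaces in a real inner product space V inducing a directed chamber decomposition of a polyhedron P ⊆ V, and assume the central chamber P⁺ = P ∩ ⋂_{α∈𝒜} H_α⁺ has nonempty interior. Then for every compact chamber P_J (with nonempty interior in V) distinct from the central chamber, the positive boundary ∂⁺P_J is a strong deformation retract of P_J; that is, there exists a continuous map H : [0,1] × P_J → P_J with H(0,v) = v for all v ∈ P_J, H(1,v) ∈ ∂⁺P_J for all v ∈ P_J, and H(t,w) = w for all w ∈ ∂⁺P_J and all t ∈ [0,1]. -/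
/-!
Directed chamber decompositions: if the central chamber
`P⁺ = P ∩ ⋂_{α ∈ 𝒜} H_α⁺` has nonempty interior, then for every compact chamber
`P_J` (of full dimension, i.e. with nonempty interior) different from the central
chamber, the positive boundary `∂⁺P_J` is a strong deformation retract of `P_J`.
-/

open Set RealInnerProductSpace

variable {V : Type*} [NormedAddCommGroup V] [InnerProductSpace ℝ V]
variable {A : Type*}

/-- The closed positive halfspace `H_α⁺ = {v : ⟨v, u_α⟩ ≥ b_α}`. -/
def Hplus (u : A → V) (b : A → ℝ) (α : A) : Set V := {v | b α ≤ ⟪v, u α⟫}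

/-- The closed negative halfspace `H_α⁻ = {v : ⟨v, u_α⟩ ≤ b_α}`. -/
def Hminus (u : A → V) (b : A → ℝ) (α : A) : Set V := {v | ⟪v, u α⟫ ≤ b α}

/-- The separating hyperplane `H_α = {v : ⟨v, u_α⟩ = b_α}`. -/
def Hyperplane (u : A → V) (b : A → ℝ) (α : A) : Set V := {v | ⟪v, u α⟫ = b α}

/-- The chamber `P_J = P ∩ (⋂_{α ∈ J} H_α⁺) ∩ (⋂_{α ∉ J} H_α⁻)`. -/
def chamber (P : Set V) (u : A → V) (b : A → ℝ) (J : Set A) : Set V :=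
  P ∩ (⋂ α ∈ J, Hplus u b α) ∩ (⋂ α ∈ Jᶜ, Hminus u b α)

/-- The positive boundary `∂⁺P_J = P_J ∩ (∂P ∪ ⋃_{α ∈ J} H_α)`. -/
def posBoundary (P : Set V) (u : A → V) (b : A → ℝ) (J : Set A) : Set V :=
  chamber P u b J ∩ (frontier P ∪ ⋃ α ∈ J, Hyperplane u b α)


lemma exit_time_exists {V : Type*} [NormedAddCommGroup V] [InnerProductSpace ℝ V]
    {I : Type*} [Fintype I] (ν : I → V) (d : I → ℝ) (p : V)
    (Q : Set V) (hQ : ∀ x, x ∈ Q ↔ ∀ i, d i ≤ ⟪x, ν i⟫)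
    (hpQ : p ∉ Q) (hcpt : IsCompact Q) :
    ∃ lam : V → ℝ,
      ContinuousOn lam Q ∧
      (∀ x ∈ Q, 1 ≤ lam x) ∧
      (∀ x ∈ Q, p + lam x • (x - p) ∈ Q) ∧
      (∀ x ∈ Q, ∃ i, ⟪x - p, ν i⟫ < 0 ∧ ⟪p + lam x • (x - p), ν i⟫ = d i) ∧
      (∀ x ∈ Q, ∀ i, ⟪x - p, ν i⟫ < 0 → ⟪x, ν i⟫ = d i → lam x = 1) := by
  classical
  set a : I → V → ℝ := fun i x => ⟪x - p, ν i⟫ with ha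
  have hacont : ∀ i, Continuous (a i) := fun i =>
    (continuous_id.sub continuous_const).inner continuous_const
  set T : V → Finset I := fun x => Finset.univ.filter (fun i => a i x < 0) with hT
  have hmemT : ∀ x i, i ∈ T x ↔ a i x < 0 := by
    intro x i; simp [hT]
  -- the inner product of a ray point
  have hray : ∀ (x : V) (t : ℝ) (i : I), ⟪p + t • (x - p), ν i⟫ = ⟪p, ν i⟫ + t * a i x := by
    intro x t i
    rw [inner_add_left, real_inner_smul_left]
  -- T x nonempty for x ∈ Q
  have hTne : ∀ x ∈ Q, (T x).Nonempty := by
    intro x hx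
    by_contra hemp
    push_neg at hemp
    have hge : ∀ i, 0 ≤ a i x := by
      intro i
      by_contra hlt
      push_neg at hlt
      exact (Finset.not_nonempty_iff_eq_empty.2 hemp) ⟨i, (hmemT x i).2 hlt⟩
    obtain ⟨R, hR⟩ := hcpt.isBounded.subset_closedBall 0
    have hxp : x ≠ p := fun h => hpQ (h ▸ hx)
    have hnorm : (0:ℝ) < ‖x - p‖ := by
      simpa [sub_eq_zero] using hxp
    set t : ℝ := (|R| + ‖p‖ + 1) / ‖x - p‖ with hts
    have ht1 : 1 ≤ t := by
      have hxR : ‖x‖ ≤ |R| := by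
        have := hR hx
        simp only [Metric.mem_closedBall, dist_zero_right] at this
        exact this.trans (le_abs_self R)
      have : ‖x - p‖ ≤ |R| + ‖p‖ := (norm_sub_le x p).trans (by linarith)
      rw [hts, le_div_iff₀ hnorm]
      linarith
    have hmem : p + t • (x - p) ∈ Q := by
      rw [hQ]
      intro i
      have hxi := (hQ x).1 hx i
      have : ⟪x, ν i⟫ = ⟪p, ν i⟫ + a i x := by
        simp [ha, inner_sub_left]
      rw [hray]
      nlinarith [hge i]
    have := hR hmem
    simp only [Metric.mem_closedBall, dist_zero_right] at this
    have h1 : ‖t • (x - p)‖ ≤ ‖p + t • (x - p)‖ + ‖p‖ := by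
      calc ‖t • (x - p)‖ = ‖(p + t • (x - p)) - p‖ := by rw [add_sub_cancel_left]
        _ ≤ ‖p + t • (x - p)‖ + ‖p‖ := norm_sub_le _ _
    have h2 : ‖t • (x - p)‖ = t * ‖x - p‖ := by
      rw [norm_smul, Real.norm_eq_abs, abs_of_pos (by linarith)]
    have h3 : t * ‖x - p‖ = |R| + ‖p‖ + 1 := by
      rw [hts, div_mul_cancel₀ _ (ne_of_gt hnorm)]
    have hRabs : R ≤ |R| := le_abs_self R
    nlinarith [this, h1, h2, h3]
  set ratio : I → V → ℝ := fun i x => (d i - ⟪p, ν i⟫) / a i x with hratio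
  set lam : V → ℝ := fun x =>
    if h : (T x).Nonempty then (T x).inf' h (fun i => ratio i x) else 1 with hlam
  have hlamQ : ∀ (x : V) (hx : x ∈ Q), lam x = (T x).inf' (hTne x hx) (fun i => ratio i x) := by
    intro x hx
    simp only [hlam]
    exact dif_pos (hTne x hx)
  -- 1 ≤ lam on Q
  have h1 : ∀ x ∈ Q, 1 ≤ lam x := by
    intro x hx
    rw [hlamQ x hx]
    apply Finset.le_inf'
    intro i hi
    have hai : a i x < 0 := (hmemT x i).1 hi
    have hxi := (hQ x).1 hx i
    have hxsplit : ⟪x, ν i⟫ = ⟪p, ν i⟫ + a i x := by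
      simp [ha, inner_sub_left]
    rw [hratio, le_div_iff_of_neg hai]
    nlinarith
  -- r x ∈ Q
  have h3 : ∀ x ∈ Q, p + lam x • (x - p) ∈ Q := by
    intro x hx
    rw [hQ]
    intro i
    rw [hray]
    by_cases hai : a i x < 0
    · have hle : lam x ≤ ratio i x := by
        rw [hlamQ x hx]
        exact Finset.inf'_le _ ((hmemT x i).2 hai)
      rw [hratio, le_div_iff_of_neg hai] at hle
      linarith
    · push_neg at hai
      have hxi := (hQ x).1 hx i
      have hxsplit : ⟪x, ν i⟫ = ⟪p, ν i⟫ + a i x := by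
        simp [ha, inner_sub_left]
      nlinarith [h1 x hx]
  -- tight constraint at r x
  have h4 : ∀ x ∈ Q, ∃ i, a i x < 0 ∧ ⟪p + lam x • (x - p), ν i⟫ = d i := by
    intro x hx
    obtain ⟨i, hi, hinf⟩ := Finset.exists_mem_eq_inf' (hTne x hx) (fun i => ratio i x)
    have hai : a i x < 0 := (hmemT x i).1 hi
    refine ⟨i, hai, ?_⟩
    rw [hray, hlamQ x hx, hinf, hratio]
    simp only
    rw [div_mul_cancel₀ _ (ne_of_lt hai)]
    ring
  -- fixed points
  have h5 : ∀ x ∈ Q, ∀ i, a i x < 0 → ⟪x, ν i⟫ = d i → lam x = 1 := by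
    intro x hx i hai htight
    have hle : lam x ≤ ratio i x := by
      rw [hlamQ x hx]
      exact Finset.inf'_le _ ((hmemT x i).2 hai)
    have hxsplit : ⟪x, ν i⟫ = ⟪p, ν i⟫ + a i x := by
      simp [ha, inner_sub_left]
    have hr1 : ratio i x = 1 := by
      have hda : d i - ⟪p, ν i⟫ = a i x := by linarith
      rw [hratio]
      simp only
      rw [hda, div_self (ne_of_lt hai)]
    exact le_antisymm (hr1 ▸ hle) (h1 x hx)
  -- continuity
  have h2 : ContinuousOn lam Q := by
    intro x₀ hx₀
    have hL := hlamQ x₀ hx₀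
    set L : ℝ := lam x₀ with hLdef
    rw [ContinuousWithinAt]
    rw [tendsto_order]
    constructor
    · -- lower bound
      intro l hl
      have key : ∀ i : I, ∀ᶠ x in nhdsWithin x₀ Q, (a i x < 0 → l < ratio i x) := by
        intro i
        rcases lt_trichotomy (a i x₀) 0 with hneg | hzero | hpos
        · -- ratio i is continuous at x₀ and ratio i x₀ ≥ L > l
          have hcont : Filter.Tendsto (fun x => ratio i x) (nhds x₀) (nhds (ratio i x₀)) :=
            (tendsto_const_nhds.div ((hacont i).tendsto x₀) (ne_of_lt hneg))
          have hgeL : L ≤ ratio i x₀ := by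
            rw [hLdef, hlamQ x₀ hx₀]
            exact Finset.inf'_le _ ((hmemT x₀ i).2 hneg)
          have : ∀ᶠ x in nhds x₀, l < ratio i x :=
            hcont.eventually (lt_mem_nhds (lt_of_lt_of_le hl hgeL))
          exact (this.filter_mono nhdsWithin_le_nhds).mono (fun x hx _ => hx)
        · by_cases hpd : ⟪p, ν i⟫ ≤ d i
          · -- vacuous on Q
            have hQmem : ∀ᶠ x in nhdsWithin x₀ Q, x ∈ Q := self_mem_nhdsWithin
            refine hQmem.mono (fun x hx hax => ?_)
            exfalso
            have hxi := (hQ x).1 hx i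
            have hxsplit : ⟪x, ν i⟫ = ⟪p, ν i⟫ + a i x := by
              simp [ha, inner_sub_left]
            linarith
          · push_neg at hpd
            set m : ℝ := ⟪p, ν i⟫ - d i with hm
            have hmpos : 0 < m := by rw [hm]; linarith
            set δ : ℝ := m / (|L| + 1) with hδ
            have hδpos : 0 < δ := by positivity
            have hev : ∀ᶠ x in nhds x₀, a i x ∈ Ioo (-δ) δ :=
              ((hacont i).tendsto x₀).eventually
                (by rw [hzero]; exact Ioo_mem_nhds (by linarith) hδpos)
            refine (hev.filter_mono nhdsWithin_le_nhds).mono (fun x hx hax => ?_)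
            have hna : 0 < -(a i x) := by linarith
            have hnaδ : -(a i x) < δ := by
              have := hx.1
              linarith
            have hrform : ratio i x = m / (-(a i x)) := by
              rw [hratio, hm]
              rw [div_eq_div_iff (ne_of_lt hax) (by linarith : -(a i x) ≠ 0)]
              ring
            have hbig : |L| + 1 < ratio i x := by
              rw [hrform]
              rw [lt_div_iff₀ hna]
              calc (|L| + 1) * -(a i x) < (|L| + 1) * δ := by
                    apply mul_lt_mul_of_pos_left hnaδ (by positivity)
                _ = m := by
                    rw [hδ]
                    field_simp
            have hlL : l < L := hl
            have : L ≤ |L| := le_abs_self L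
            linarith
        · have hev : ∀ᶠ x in nhds x₀, 0 < a i x :=
            ((hacont i).tendsto x₀).eventually (lt_mem_nhds hpos)
          refine (hev.filter_mono nhdsWithin_le_nhds).mono (fun x hx hax => ?_)
          linarith
      have hall : ∀ᶠ x in nhdsWithin x₀ Q, ∀ i : I, (a i x < 0 → l < ratio i x) :=
        Filter.eventually_all.2 key
      have hQmem : ∀ᶠ x in nhdsWithin x₀ Q, x ∈ Q := self_mem_nhdsWithin
      refine (hall.and hQmem).mono (fun x ⟨hx1, hx2⟩ => ?_)
      rw [hlamQ x hx2]
      rw [Finset.lt_inf'_iff]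
      intro i hi
      exact hx1 i ((hmemT x i).1 hi)
    · -- upper bound
      intro v hv
      obtain ⟨i₀, hi₀, hinf⟩ := Finset.exists_mem_eq_inf' (hTne x₀ hx₀) (fun i => ratio i x₀)
      have hneg : a i₀ x₀ < 0 := (hmemT x₀ i₀).1 hi₀
      have hLr : L = ratio i₀ x₀ := by rw [hLdef, hlamQ x₀ hx₀, hinf]
      have hcont : Filter.Tendsto (fun x => ratio i₀ x) (nhds x₀) (nhds (ratio i₀ x₀)) :=
        (tendsto_const_nhds.div ((hacont i₀).tendsto x₀) (ne_of_lt hneg))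
      have hev1 : ∀ᶠ x in nhds x₀, ratio i₀ x < v :=
        hcont.eventually (gt_mem_nhds (hLr ▸ hv))
      have hev2 : ∀ᶠ x in nhds x₀, a i₀ x < 0 :=
        ((hacont i₀).tendsto x₀).eventually (gt_mem_nhds hneg)
      refine ((hev1.and hev2).filter_mono nhdsWithin_le_nhds).mono (fun x ⟨hx1, hx2⟩ => ?_)
      have hiT : i₀ ∈ T x := (hmemT x i₀).2 hx2
      have hne' : (T x).Nonempty := ⟨i₀, hiT⟩
      have : lam x ≤ ratio i₀ x := by
        have heq : lam x = (T x).inf' hne' (fun i => ratio i x) := by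
          simp only [hlam]
          exact dif_pos hne'
        rw [heq]
        exact Finset.inf'_le _ hiT
      linarith
  exact ⟨lam, h2, h1, h3, h4, h5⟩


lemma strict_of_interior {V : Type*} [NormedAddCommGroup V] [InnerProductSpace ℝ V]
    {S : Set V} {p g : V} {r : ℝ} (hp : p ∈ interior S)
    (hsub : S ⊆ {v | r ≤ ⟪v, g⟫}) (hg : g ≠ 0) : r < ⟪p, g⟫ := by
  obtain ⟨δ, hδpos, hball⟩ := Metric.mem_nhds_iff.1 (mem_interior_iff_mem_nhds.1 hp)
  have hng : 0 < ‖g‖ := norm_pos_iff.2 hg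
  set t : ℝ := δ / (2 * ‖g‖) with ht
  have htpos : 0 < t := by positivity
  have hmem : p - t • g ∈ S := by
    apply hball
    simp only [Metric.mem_ball, dist_eq_norm]
    rw [sub_sub_cancel_left, norm_neg, norm_smul, Real.norm_eq_abs, abs_of_pos htpos]
    have : t * ‖g‖ = δ / 2 := by
      rw [ht]; field_simp
    linarith
  have := hsub hmem
  simp only [mem_setOf_eq, inner_sub_left, real_inner_smul_left,
    real_inner_self_eq_norm_sq] at this
  nlinarith [this, mul_pos htpos (mul_pos hng hng)]

lemma mem_frontier_of_tight {V : Type*} [NormedAddCommGroup V] [InnerProductSpace ℝ V]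
    {S : Set V} {z dir g : V} {r : ℝ} (hz : z ∈ S)
    (hsub : S ⊆ {v | r ≤ ⟪v, g⟫}) (ht : ⟪z, g⟫ = r) (hd : ⟪dir, g⟫ < 0) :
    z ∈ frontier S := by
  have hnI : z ∉ interior S := by
    intro hI
    obtain ⟨δ, hδpos, hball⟩ := Metric.mem_nhds_iff.1 (mem_interior_iff_mem_nhds.1 hI)
    set ε : ℝ := δ / (2 * (‖dir‖ + 1)) with hε
    have hεpos : 0 < ε := by positivity
    have hmem : z + ε • dir ∈ S := by
      apply hball
      simp only [Metric.mem_ball, dist_eq_norm, add_sub_cancel_left, norm_smul,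
        Real.norm_eq_abs, abs_of_pos hεpos]
      have h1 : ε * ‖dir‖ < ε * (‖dir‖ + 1) := by nlinarith
      have h2 : ε * (‖dir‖ + 1) = δ / 2 := by
        rw [hε]; field_simp
      linarith
    have := hsub hmem
    simp only [mem_setOf_eq, inner_add_left, real_inner_smul_left, ht] at this
    nlinarith
  exact ⟨subset_closure hz, hnI⟩

lemma mem_chamber_iff {P : Set V} {u : A → V} {b : A → ℝ} {J : Set A} {v : V} :
    v ∈ chamber P u b J ↔
      v ∈ P ∧ (∀ α ∈ J, b α ≤ ⟪v, u α⟫) ∧ (∀ α ∉ J, ⟪v, u α⟫ ≤ b α) := by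
  simp [chamber, Hplus, Hminus, mem_iInter, and_assoc]


/-- If the directed chamber decomposition admits a central chamber
(`P⁺ = P_𝒜` has nonempty interior), then for every compact full-dimensional
chamber `P_J` other than the central one, the positive boundary `∂⁺P_J` is a
strong deformation retract of `P_J`. -/
theorem posBoundary_deformation_retract
    [FiniteDimensional ℝ V] [Fintype A] (u : A → V) (b : A → ℝ)
    (P : Set V)
    -- `P` is a polyhedron: a finite intersection of closed halfspaces
    (hP : ∃ (n : ℕ) (w : Fin n → V) (c : Fin n → ℝ),
      P = ⋂ i, {v : V | c i ≤ ⟪v, w i⟫})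
    -- the central chamber `P⁺ = P_𝒜` has nonempty interior
    (hcentral : (interior (chamber P u b (univ : Set A))).Nonempty)
    (J : Set A)
    -- `P_J` is a chamber (full-dimensional), compact, and not the central chamber
    (hfull : (interior (chamber P u b J)).Nonempty)
    (hcpt : IsCompact (chamber P u b J))
    (hne : chamber P u b J ≠ chamber P u b (univ : Set A)) :
    ∃ H : unitInterval × V → V,
      ContinuousOn H ((univ : Set unitInterval) ×ˢ chamber P u b J) ∧
      (∀ v ∈ chamber P u b J, H (0, v) = v) ∧
      (∀ t : unitInterval, ∀ v ∈ chamber P u b J, H (t, v) ∈ chamber P u b J) ∧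
      (∀ v ∈ chamber P u b J, H (1, v) ∈ posBoundary P u b J) ∧
      (∀ t : unitInterval, ∀ w ∈ posBoundary P u b J, H (t, w) = w) := by
  classical
  by_cases hdeg : ∃ α ∈ J, u α = 0 ∧ b α = 0
  · obtain ⟨α, hαJ, hu0, hb0⟩ := hdeg
    refine ⟨fun q => q.2, continuous_snd.continuousOn, fun v _ => rfl,
      fun t v hv => hv, fun v hv => ⟨hv, Or.inr ?_⟩, fun t w hw => rfl⟩
    exact mem_biUnion hαJ (by simp [Hyperplane, hu0, hb0])
  push_neg at hdeg
  obtain ⟨n, w0, c0, hP0⟩ := hP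
  have hQne : (chamber P u b J).Nonempty := hfull.mono interior_subset
  obtain ⟨z, hz⟩ := hQne
  have hzP : z ∈ P := hz.1.1
  -- prune degenerate constraints of P
  set c1 : Fin n → ℝ := fun k => if w0 k = 0 then -1 else c0 k with hc1
  have hP1 : P = ⋂ k, {v : V | c1 k ≤ ⟪v, w0 k⟫} := by
    rw [hP0]
    apply iInter_congr
    intro k
    by_cases hk : w0 k = 0
    · have hc0 : c0 k ≤ 0 := by
        have h := hzP
        rw [hP0] at h
        simpa [hk] using mem_iInter.1 h k
      ext v
      simp [hc1, hk, hc0]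
    · simp [hc1, hk]
  have hPclosed : IsClosed P := by
    rw [hP0]
    exact isClosed_iInter fun k =>
      isClosed_le continuous_const (continuous_id.inner continuous_const)
  have hchsubP : ∀ K : Set A, chamber P u b K ⊆ P := fun K v hv => hv.1.1
  -- choose the viewpoint p
  have hpex : ∃ p ∈ interior (chamber P u b (univ : Set A)), p ∉ chamber P u b J := by
    by_contra hcon
    push_neg at hcon
    obtain ⟨p₀, hp₀⟩ := hcentral
    obtain ⟨δ, hδpos, hball⟩ := Metric.mem_nhds_iff.1 (mem_interior_iff_mem_nhds.1 hp₀)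
    have hballint : Metric.ball p₀ δ ⊆ interior (chamber P u b (univ : Set A)) :=
      interior_maximal hball Metric.isOpen_ball
    have hdegen : ∀ α ∉ J, u α = 0 ∧ b α = 0 := by
      intro α hα
      have hEq : ∀ y ∈ Metric.ball p₀ δ, ⟪y, u α⟫ = b α := by
        intro y hy
        have h1 : b α ≤ ⟪y, u α⟫ := (mem_chamber_iff.1 (hball hy)).2.1 α (mem_univ α)
        have h2 : ⟪y, u α⟫ ≤ b α :=
          (mem_chamber_iff.1 (hcon y (hballint hy))).2.2 α hα
        linarith
      have hu0 : u α = 0 := by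
        by_contra hu
        have hng : 0 < ‖u α‖ := norm_pos_iff.2 hu
        set t : ℝ := δ / (2 * ‖u α‖) with htdef
        have htpos : 0 < t := by positivity
        have hmem : p₀ + t • u α ∈ Metric.ball p₀ δ := by
          simp only [Metric.mem_ball, dist_eq_norm, add_sub_cancel_left, norm_smul,
            Real.norm_eq_abs, abs_of_pos htpos]
          have : t * ‖u α‖ = δ / 2 := by rw [htdef]; field_simp
          linarith
        have h1 := hEq _ hmem
        have h2 := hEq p₀ (Metric.mem_ball_self hδpos)
        rw [inner_add_left, real_inner_smul_left, real_inner_self_eq_norm_sq, h2] at h1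
        nlinarith [mul_pos htpos (pow_pos hng 2)]
      refine ⟨hu0, ?_⟩
      have h2 := hEq p₀ (Metric.mem_ball_self hδpos)
      rw [hu0] at h2
      simpa using h2.symm
    apply hne
    ext v
    rw [mem_chamber_iff, mem_chamber_iff]
    constructor
    · rintro ⟨hvP, hJ, _⟩
      refine ⟨hvP, fun α _ => ?_, fun α hα => absurd (mem_univ α) hα⟩
      by_cases hαJ : α ∈ J
      · exact hJ α hαJ
      · obtain ⟨hu0, hb0⟩ := hdegen α hαJ
        simp [hu0, hb0]
    · rintro ⟨hvP, hJ, -⟩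
      refine ⟨hvP, fun α hα => hJ α (mem_univ α), fun α hα => ?_⟩
      obtain ⟨hu0, hb0⟩ := hdegen α hα
      simp [hu0, hb0]
  obtain ⟨p, hpI, hpQ⟩ := hpex
  have hpCu : p ∈ chamber P u b (univ : Set A) := interior_subset hpI
  have hpPint : p ∈ interior P := interior_mono (hchsubP univ) hpI
  -- combined constraint system for the chamber
  set ν : Fin n ⊕ A → V := Sum.elim w0 (fun α => if α ∈ J then u α else -u α) with hν
  set d : Fin n ⊕ A → ℝ := Sum.elim c1 (fun α => if α ∈ J then b α else -b α) with hd
  have hQiff : ∀ x, x ∈ chamber P u b J ↔ ∀ i, d i ≤ ⟪x, ν i⟫ := by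
    intro x
    rw [mem_chamber_iff]
    constructor
    · rintro ⟨hxP, hJ, hJc⟩ i
      cases i with
      | inl k =>
        have h := hxP
        rw [hP1] at h
        simpa [hν, hd] using mem_iInter.1 h k
      | inr α =>
        by_cases hα : α ∈ J
        · simpa [hν, hd, hα] using hJ α hα
        · have := hJc α hα
          simp only [hν, hd, Sum.elim_inr, if_neg hα, inner_neg_right, neg_le_neg_iff]
          exact this
    · intro h
      refine ⟨?_, fun α hα => ?_, fun α hα => ?_⟩
      · rw [hP1, mem_iInter]
        intro k
        simpa [hν, hd] using h (Sum.inl k)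
      · simpa [hν, hd, hα] using h (Sum.inr α)
      · have := h (Sum.inr α)
        simp only [hν, hd, Sum.elim_inr, if_neg hα, inner_neg_right, neg_le_neg_iff] at this
        exact this
  obtain ⟨lam, hcont, hone, hrQ, htight, hfix⟩ :=
    exit_time_exists ν d p (chamber P u b J) hQiff hpQ hcpt
  -- the retraction lands in the positive boundary
  have hrPB : ∀ x ∈ chamber P u b J, p + lam x • (x - p) ∈ posBoundary P u b J := by
    intro x hx
    obtain ⟨i, hai, htgt⟩ := htight x hx
    refine ⟨hrQ x hx, ?_⟩
    cases i with
    | inl k =>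
      left
      refine mem_frontier_of_tight (dir := x - p) (g := w0 k) (r := c1 k)
        (hchsubP J (hrQ x hx)) ?_ ?_ ?_
      · rw [hP1]
        intro v hv
        exact mem_iInter.1 hv k
      · simpa [hν, hd] using htgt
      · simpa [hν] using hai
    | inr α =>
      by_cases hα : α ∈ J
      · right
        refine mem_biUnion hα ?_
        simpa [Hyperplane, hν, hd, hα] using htgt
      · exfalso
        have hp1 : ⟪p, ν (Sum.inr α)⟫ ≤ d (Sum.inr α) := by
          have := (mem_chamber_iff.1 hpCu).2.1 α (mem_univ α)
          simp only [hν, hd, Sum.elim_inr, if_neg hα, inner_neg_right, neg_le_neg_iff]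
          exact this
        have h1 := hone x hx
        have hsplit : ⟪p + lam x • (x - p), ν (Sum.inr α)⟫
            = ⟪p, ν (Sum.inr α)⟫ + lam x * ⟪x - p, ν (Sum.inr α)⟫ := by
          rw [inner_add_left, real_inner_smul_left]
        rw [hsplit] at htgt
        nlinarith
  -- points of the positive boundary are fixed
  have hfix' : ∀ w ∈ posBoundary P u b J, lam w = 1 := by
    rintro w ⟨hwQ, hw2⟩
    rcases hw2 with hwF | hwH
    · have hwP : w ∈ P := hwQ.1.1
      have hwnI : w ∉ interior P := fun h => ((hPclosed.frontier_eq ▸ hwF).2) h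
      have hU : {v : V | ∀ k, c1 k < ⟪v, w0 k⟫} ⊆ interior P := by
        apply interior_maximal
        · intro v hv
          rw [hP1, mem_iInter]
          exact fun k => le_of_lt (hv k)
        · have hUeq : {v : V | ∀ k, c1 k < ⟪v, w0 k⟫} = ⋂ k, {v : V | c1 k < ⟪v, w0 k⟫} := by
            ext v; simp [mem_iInter]
          rw [hUeq]
          exact isOpen_iInter_of_finite fun k =>
            isOpen_lt continuous_const (continuous_id.inner continuous_const)
      have hex : ∃ k, ⟪w, w0 k⟫ ≤ c1 k := by
        by_contra hcon2
        push_neg at hcon2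
        exact hwnI (hU hcon2)
      obtain ⟨k, hk⟩ := hex
      have hwk : ⟪w, w0 k⟫ = c1 k := le_antisymm hk (by
        have h := hwP
        rw [hP1] at h
        exact mem_iInter.1 h k)
      have hwk0 : w0 k ≠ 0 := by
        intro h0
        rw [h0] at hwk
        simp [hc1, h0] at hwk
      have hps : c1 k < ⟪p, w0 k⟫ := by
        refine strict_of_interior hpPint ?_ hwk0
        rw [hP1]
        intro v hv
        exact mem_iInter.1 hv k
      apply hfix w hwQ (Sum.inl k)
      · simp only [hν, Sum.elim_inl, inner_sub_left]
        linarith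
      · simpa [hν, hd] using hwk
    · obtain ⟨α, hα, hwα⟩ := mem_iUnion₂.1 hwH
      have hwα' : ⟪w, u α⟫ = b α := hwα
      have huα : u α ≠ 0 := by
        intro h0
        apply hdeg α hα h0
        rw [h0] at hwα'
        simpa using hwα'.symm
      have hps : b α < ⟪p, u α⟫ := by
        refine strict_of_interior hpI ?_ huα
        intro v hv
        exact (mem_chamber_iff.1 hv).2.1 α (mem_univ α)
      apply hfix w hwQ (Sum.inr α)
      · simp only [hν, Sum.elim_inr, if_pos hα, inner_sub_left]
        linarith [hwα']
      · simp only [hν, hd, Sum.elim_inr, if_pos hα]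
        exact hwα'
  -- convexity of the chamber
  have hconv : Convex ℝ (chamber P u b J) := by
    intro x hx y hy s t hs ht hst
    rw [hQiff]
    intro i
    have hxi := (hQiff x).1 hx i
    have hyi := (hQiff y).1 hy i
    rw [inner_add_left, real_inner_smul_left, real_inner_smul_left]
    have hsum : s * d i + t * d i = d i := by rw [← add_mul, hst, one_mul]
    nlinarith [mul_le_mul_of_nonneg_left hxi hs, mul_le_mul_of_nonneg_left hyi ht]
  -- assemble the homotopy
  refine ⟨fun q => (1 - (q.1 : ℝ)) • q.2 + (q.1 : ℝ) • (p + lam q.2 • (q.2 - p)),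
    ?_, ?_, ?_, ?_, ?_⟩
  · have hlam2 : ContinuousOn (fun q : unitInterval × V => lam q.2)
        ((univ : Set unitInterval) ×ˢ chamber P u b J) :=
      hcont.comp continuous_snd.continuousOn fun q hq => hq.2
    have hcoe : Continuous fun q : unitInterval × V => (q.1 : ℝ) :=
      continuous_subtype_val.comp continuous_fst
    exact ((continuous_const.sub hcoe).continuousOn.smul continuous_snd.continuousOn).add
      (hcoe.continuousOn.smul (continuousOn_const.add
        (hlam2.smul (continuous_snd.sub continuous_const).continuousOn)))
  · intro v _
    simp
  · intro t v hv
    exact hconv hv (hrQ v hv) (by linarith [t.2.2] : (0:ℝ) ≤ 1 - (t:ℝ)) t.2.1 (by ring)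
  · intro v hv
    simpa using hrPB v hv
  · intro t w hw
    show (1 - (t:ℝ)) • w + (t:ℝ) • (p + lam w • (w - p)) = w
    rw [hfix' w hw]
    rw [one_smul, add_sub_cancel, ← add_smul, sub_add_cancel, one_smul]
end

section
/- Fix integers k ≥ 1 and m ≥ 0. Let D⁺ = {u ∈ ℝᵏ : |u| ≤ 1, u_k ≥ 0}, let S⁺ = {u ∈ ℝᵏ : |u| = 1, u_k ≥ 0}, and let Sᵐ be the unit sphere in ℝ^{m+1}. Consider the equivalence relation ∼ on D⁺ × Sᵐ generated by (u, y) ∼ (u, y′) for all u ∈ S⁺ and y, y′ ∈ Sᵐ. Then the map sending the class of (u, y) to (u₁, √(1 − |u|²)·y) ∈ ℝ^{k−1} × ℝ^{m+1} = ℝ^{k+m} (where u₁ ∈ ℝ^{k−1} denotes the first k−1 coordinates of u) is a well-defined homeomorphism from the quotient space (D⁺ × Sᵐ)/∼ onto the closed unit ball D^{k+m} ⊆ ℝ^{k+m}, and it carries the image of {u ∈ D⁺ : u_k = 0} × Sᵐ in the quotient onto the boundary sphere S^{k+m−1} = {z ∈ ℝ^{k+m} : |z| = 1}. -/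
open Metric Set

noncomputable section

private lemma eq_of_sq_eq' {a b : ℝ} (ha : 0 ≤ a) (hb : 0 ≤ b) (h : a ^ 2 = b ^ 2) : a = b := by
  have h' : (a - b) * (a + b) = 0 := by ring_nf; linarith
  rcases mul_eq_zero.mp h' with h'' | h'' <;> linarith

private lemma normSq_split {k : ℕ} (last : Fin k) (hlast : (last : ℕ) = k - 1) (hk : 1 ≤ k)
    (u : EuclideanSpace ℝ (Fin k)) (v : EuclideanSpace ℝ (Fin (k - 1)))
    (hv : ∀ i : Fin (k - 1), v i = u (Fin.castLE (Nat.sub_le k 1) i)) :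
    ‖u‖ ^ 2 = ‖v‖ ^ 2 + u last ^ 2 := by
  have h1 : ∀ (n : ℕ) (x : EuclideanSpace ℝ (Fin n)), ‖x‖ ^ 2 = ∑ i, x i ^ 2 := by
    intro n x
    rw [EuclideanSpace.norm_eq, Real.sq_sqrt (by positivity)]
    simp [sq_abs]
  rw [h1 k u, h1 (k - 1) v]
  have hkk : k - 1 + 1 = k := by omega
  rw [← Fintype.sum_equiv (finCongr hkk) (fun j => u (finCongr hkk j) ^ 2) (fun i => u i ^ 2)
      (fun j => rfl), Fin.sum_univ_castSucc]
  congr 1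
  · apply Finset.sum_congr rfl
    intro i _
    rw [hv i]
    rfl
  · congr 1
    exact congrArg u.ofLp (Fin.ext (by simp [hlast]))

set_option maxHeartbeats 1000000 in
set_option synthInstance.maxHeartbeats 1000000 in
theorem quotient_halfDisc_sphere_homeo (k m : ℕ) (hk : 1 ≤ k)
    (last : Fin k) (hlast : (last : ℕ) = k - 1)
    -- `D⁺ = Dᵏ ∩ H⁺`
    (Dp : Set (EuclideanSpace ℝ (Fin k)))
    (hDp : Dp = {u | ‖u‖ ≤ 1 ∧ 0 ≤ u last})
    -- the unit sphere `Sᵐ ⊆ ℝ^{m+1}`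
    (Sm : Set (EuclideanSpace ℝ (Fin (m + 1))))
    (hSm : Sm = sphere 0 1)
    -- the relation generating the identification: `(u,y) ∼ (u,y')` for `u ∈ S⁺`
    (r : Dp × Sm → Dp × Sm → Prop)
    (hr : ∀ p q, r p q ↔ p.1 = q.1 ∧ ‖(p.1 : EuclideanSpace ℝ (Fin k))‖ = 1)
    -- the map `(u, y) ↦ (u₁, √(1 - |u|²)·y)`
    (f : EuclideanSpace ℝ (Fin k) → EuclideanSpace ℝ (Fin (m + 1)) →
      WithLp 2 (EuclideanSpace ℝ (Fin (k - 1)) × EuclideanSpace ℝ (Fin (m + 1))))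
    (hf : ∀ u y, f u y =
      (WithLp.equiv 2 (EuclideanSpace ℝ (Fin (k - 1)) ×
        EuclideanSpace ℝ (Fin (m + 1)))).symm
        (WithLp.toLp 2 (fun i : Fin (k - 1) => u ⟨(i : ℕ), by omega⟩),
          Real.sqrt (1 - ‖u‖ ^ 2) • y)) :
    ∃ φ : Quot r ≃ₜ
        (closedBall (0 : WithLp 2 (EuclideanSpace ℝ (Fin (k - 1)) ×
          EuclideanSpace ℝ (Fin (m + 1)))) 1),
      (∀ p : Dp × Sm,
        (φ (Quot.mk r p) : WithLp 2 (EuclideanSpace ℝ (Fin (k - 1)) ×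
          EuclideanSpace ℝ (Fin (m + 1)))) = f p.1 p.2) ∧
      Subtype.val '' (φ '' (Quot.mk r ''
          {p : Dp × Sm | (p.1 : EuclideanSpace ℝ (Fin k)) last = 0})) =
        sphere (0 : WithLp 2 (EuclideanSpace ℝ (Fin (k - 1)) ×
          EuclideanSpace ℝ (Fin (m + 1)))) 1 := by
  classical
  have hp1 : ∀ p : Dp × Sm, ‖(p.1 : EuclideanSpace ℝ (Fin k))‖ ≤ 1 := by
    intro p
    have : (p.1 : EuclideanSpace ℝ (Fin k)) ∈ {u : EuclideanSpace ℝ (Fin k) | ‖u‖ ≤ 1 ∧ 0 ≤ u last} := by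
      rw [← hDp]; exact p.1.2
    exact this.1
  have hp2 : ∀ p : Dp × Sm, 0 ≤ (p.1 : EuclideanSpace ℝ (Fin k)) last := by
    intro p
    have : (p.1 : EuclideanSpace ℝ (Fin k)) ∈ {u : EuclideanSpace ℝ (Fin k) | ‖u‖ ≤ 1 ∧ 0 ≤ u last} := by
      rw [← hDp]; exact p.1.2
    exact this.2
  have hpy : ∀ p : Dp × Sm, ‖(p.2 : EuclideanSpace ℝ (Fin (m + 1)))‖ = 1 := by
    intro p
    have : (p.2 : EuclideanSpace ℝ (Fin (m + 1))) ∈ sphere (0 : EuclideanSpace ℝ (Fin (m + 1))) 1 := by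
      rw [← hSm]; exact p.2.2
    rwa [mem_sphere_iff_norm, sub_zero] at this
  -- the norm of `f u y`
  have hnf : ∀ (u : EuclideanSpace ℝ (Fin k)) (y : EuclideanSpace ℝ (Fin (m + 1))),
      ‖u‖ ≤ 1 → ‖y‖ = 1 → ‖f u y‖ ^ 2 = 1 - u last ^ 2 := by
    intro u y hu hy
    have h0 : (0 : ℝ) ≤ 1 - ‖u‖ ^ 2 := by nlinarith [norm_nonneg u]
    rw [hf, WithLp.prod_norm_sq_eq_of_L2, WithLp.equiv_symm_apply, WithLp.toLp_fst, WithLp.toLp_snd,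
      norm_smul, Real.norm_eq_abs, abs_of_nonneg (Real.sqrt_nonneg _), hy, mul_one,
      Real.sq_sqrt h0]
    have e1 := normSq_split last hlast hk u
      (WithLp.toLp 2 (fun i : Fin (k - 1) => u ⟨(i : ℕ), by omega⟩)) (fun i => rfl)
    linarith [e1]
  have hmem : ∀ p : Dp × Sm, f p.1 p.2 ∈ closedBall
      (0 : WithLp 2 (EuclideanSpace ℝ (Fin (k - 1)) × EuclideanSpace ℝ (Fin (m + 1)))) 1 := by
    intro p
    rw [mem_closedBall_zero_iff]
    nlinarith [norm_nonneg (f p.1 p.2), sq_nonneg ((p.1 : EuclideanSpace ℝ (Fin k)) last),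
      hnf _ _ (hp1 p) (hpy p)]
  set g : Dp × Sm → ↥(closedBall
      (0 : WithLp 2 (EuclideanSpace ℝ (Fin (k - 1)) × EuclideanSpace ℝ (Fin (m + 1)))) 1) :=
    fun p => ⟨f p.1 p.2, hmem p⟩ with hg
  -- `g` respects the relation
  have hresp : ∀ p q, r p q → g p = g q := by
    intro p q hpq
    rw [hr] at hpq
    obtain ⟨h1, h2⟩ := hpq
    apply Subtype.ext
    show f p.1 p.2 = f q.1 q.2
    rw [hf, hf, ← h1, h2]
    norm_num
  -- continuity of coordinates
  have hcoord : ∀ j : Fin k, Continuous fun u : EuclideanSpace ℝ (Fin k) => u j := fun j =>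
    (continuous_apply j).comp (PiLp.continuous_ofLp 2 fun _ : Fin k => ℝ)
  -- continuity of `g`
  have hcg : Continuous g := by
    apply Continuous.subtype_mk
    have hfe : (fun p : Dp × Sm => f p.1 p.2) = fun p : Dp × Sm =>
        (WithLp.equiv 2 (EuclideanSpace ℝ (Fin (k - 1)) ×
          EuclideanSpace ℝ (Fin (m + 1)))).symm
          (WithLp.toLp 2 (fun i : Fin (k - 1) => (p.1 : EuclideanSpace ℝ (Fin k)) ⟨(i : ℕ), by omega⟩),
            Real.sqrt (1 - ‖(p.1 : EuclideanSpace ℝ (Fin k))‖ ^ 2) •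
              (p.2 : EuclideanSpace ℝ (Fin (m + 1)))) := by
      funext p; exact hf _ _
    rw [hfe]
    apply (WithLp.prod_continuous_toLp _ _ _).comp
    have hc1 : Continuous fun p : Dp × Sm => (p.1 : EuclideanSpace ℝ (Fin k)) :=
      continuous_subtype_val.comp continuous_fst
    have hc2 : Continuous fun p : Dp × Sm => (p.2 : EuclideanSpace ℝ (Fin (m + 1))) :=
      continuous_subtype_val.comp continuous_snd
    apply Continuous.prodMk
    · exact (PiLp.continuous_toLp 2 fun _ : Fin (k - 1) => ℝ).comp
        (continuous_pi fun i => (hcoord ⟨(i : ℕ), by omega⟩).comp hc1)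
    · exact ((Real.continuous_sqrt.comp
        (continuous_const.sub ((hc1.norm).pow 2)))).smul hc2
  -- the construction of preimages
  have hconstr : ∀ z : WithLp 2 (EuclideanSpace ℝ (Fin (k - 1)) ×
      EuclideanSpace ℝ (Fin (m + 1))), ‖z‖ ≤ 1 → ∃ p : Dp × Sm,
      f p.1 p.2 = z ∧ ((p.1 : EuclideanSpace ℝ (Fin k)) last) ^ 2 = 1 - ‖z‖ ^ 2 := by
    intro z hz
    set v := (WithLp.equiv 2 _ z).1 with hv
    set w := (WithLp.equiv 2 _ z).2 with hw
    have hzvw : (WithLp.equiv 2 (EuclideanSpace ℝ (Fin (k - 1)) ×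
        EuclideanSpace ℝ (Fin (m + 1)))).symm (v, w) = z := by
      rw [hv, hw]
      exact congrArg _ (Prod.mk.eta) |>.trans (Equiv.symm_apply_apply _ z)
    have hz2 : ‖z‖ ^ 2 = ‖v‖ ^ 2 + ‖w‖ ^ 2 := by
      rw [← hzvw, WithLp.prod_norm_sq_eq_of_L2, WithLp.equiv_symm_apply, WithLp.toLp_fst, WithLp.toLp_snd]
    have hz1 : ‖z‖ ^ 2 ≤ 1 := by nlinarith [norm_nonneg z]
    set t := Real.sqrt (1 - ‖v‖ ^ 2 - ‖w‖ ^ 2) with htdef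
    have ht0 : 0 ≤ t := Real.sqrt_nonneg _
    have ht2 : t ^ 2 = 1 - ‖v‖ ^ 2 - ‖w‖ ^ 2 := Real.sq_sqrt (by nlinarith)
    set u : EuclideanSpace ℝ (Fin k) := (WithLp.equiv 2 (∀ _ : Fin k, ℝ)).symm
      (fun i => if h : (i : ℕ) < k - 1 then v ⟨(i : ℕ), h⟩ else t) with hu
    have huapp : ∀ i : Fin k, u i = if h : (i : ℕ) < k - 1 then v ⟨(i : ℕ), h⟩ else t :=
      fun i => rfl
    have hproju : ∀ i : Fin (k - 1), u (Fin.castLE (Nat.sub_le k 1) i) = v i := by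
      intro i
      rw [huapp, dif_pos (show ((Fin.castLE (Nat.sub_le k 1) i : Fin k) : ℕ) < k - 1 from i.isLt)]
      exact congrArg v (Fin.ext rfl)
    have hulast : u last = t := by
      rw [huapp, dif_neg (by omega)]
    have hu2 : ‖u‖ ^ 2 = 1 - ‖w‖ ^ 2 := by
      have e1 := normSq_split last hlast hk u v (fun i => (hproju i).symm)
      rw [hulast] at e1
      linarith
    have hu1 : ‖u‖ ≤ 1 := by nlinarith [norm_nonneg u, sq_nonneg ‖w‖]
    set y : EuclideanSpace ℝ (Fin (m + 1)) :=
      if w = 0 then EuclideanSpace.single 0 1 else ‖w‖⁻¹ • w with hy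
    have hy1 : ‖y‖ = 1 := by
      rw [hy]
      split_ifs with h
      · simp
      · exact norm_smul_inv_norm h
    have hsq : Real.sqrt (1 - ‖u‖ ^ 2) = ‖w‖ := by
      rw [hu2]
      simp [Real.sqrt_sq_eq_abs]
    have hsmul : Real.sqrt (1 - ‖u‖ ^ 2) • y = w := by
      rw [hsq, hy]
      split_ifs with h
      · simp [h]
      · rw [smul_smul, mul_inv_cancel₀ (norm_ne_zero_iff.mpr h), one_smul]
    refine ⟨(⟨u, ?_⟩, ⟨y, ?_⟩), ?_, ?_⟩
    · rw [hDp]; exact ⟨hu1, hulast ▸ ht0⟩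
    · rw [hSm, mem_sphere_iff_norm, sub_zero]; exact hy1
    · show f u y = z
      rw [hf, ← hzvw]
      congr 1
      refine Prod.ext ?_ ?_
      · show WithLp.toLp 2 _ = v
        ext i
        exact hproju i
      · exact hsmul
    · show u last ^ 2 = 1 - ‖z‖ ^ 2
      rw [hulast, ht2]
      linarith
  -- injectivity on the quotient
  have hinj : ∀ p q : Dp × Sm, g p = g q → Quot.mk r p = Quot.mk r q := by
    intro p q hpq
    have hfe : f p.1 p.2 = f q.1 q.2 := congrArg Subtype.val hpq
    rw [hf, hf] at hfe
    have hpair := (WithLp.equiv 2 (EuclideanSpace ℝ (Fin (k - 1)) ×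
      EuclideanSpace ℝ (Fin (m + 1)))).symm.injective hfe
    rw [Prod.mk.injEq] at hpair
    obtain ⟨h1, h2⟩ := hpair
    set pu := (p.1 : EuclideanSpace ℝ (Fin k)) with hpu
    set qu := (q.1 : EuclideanSpace ℝ (Fin k)) with hqu
    have hs : Real.sqrt (1 - ‖pu‖ ^ 2) = Real.sqrt (1 - ‖qu‖ ^ 2) := by
      have hn := congrArg norm h2
      rwa [norm_smul, norm_smul, Real.norm_eq_abs, Real.norm_eq_abs, hpy p, hpy q,
        mul_one, mul_one, abs_of_nonneg (Real.sqrt_nonneg _),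
        abs_of_nonneg (Real.sqrt_nonneg _)] at hn
    have hsq : 1 - ‖pu‖ ^ 2 = 1 - ‖qu‖ ^ 2 := by
      have hA : (0 : ℝ) ≤ 1 - ‖pu‖ ^ 2 := by nlinarith [norm_nonneg pu, hp1 p]
      have hB : (0 : ℝ) ≤ 1 - ‖qu‖ ^ 2 := by nlinarith [norm_nonneg qu, hp1 q]
      exact (Real.sqrt_inj hA hB).mp hs
    have hlt2 : ∀ i : Fin (k - 1), (i : ℕ) < k := fun i => by omega
    have e1 := normSq_split last hlast hk pu
      (WithLp.toLp 2 (fun i : Fin (k - 1) => pu ⟨(i : ℕ), hlt2 i⟩)) (fun i => rfl)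
    have e2 := normSq_split last hlast hk qu
      (WithLp.toLp 2 (fun i : Fin (k - 1) => qu ⟨(i : ℕ), hlt2 i⟩)) (fun i => rfl)
    have hPQ : (WithLp.toLp 2 (fun i : Fin (k - 1) => pu ⟨(i : ℕ), hlt2 i⟩) :
        EuclideanSpace ℝ (Fin (k - 1))) = WithLp.toLp 2 (fun i : Fin (k - 1) => qu ⟨(i : ℕ), hlt2 i⟩) := by
      exact h1
    rw [← hPQ] at e2
    have hlasteq : pu last = qu last :=
      eq_of_sq_eq' (show 0 ≤ pu last from hp2 p) (show 0 ≤ qu last from hp2 q)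
        (by linarith [e1, e2, hsq])
    have hueq : pu = qu := by
      ext i
      by_cases hi : (i : ℕ) < k - 1
      · have := congrFun (congrArg WithLp.ofLp h1) ⟨(i : ℕ), hi⟩
        simpa using this
      · have : i = last := Fin.ext (by omega)
        rw [this]; exact hlasteq
    by_cases h1n : ‖pu‖ = 1
    · exact Quot.sound ((hr p q).mpr ⟨Subtype.ext hueq, h1n⟩)
    · have hlt : ‖pu‖ < 1 := lt_of_le_of_ne (hp1 p) h1n
      have hspos : 0 < Real.sqrt (1 - ‖pu‖ ^ 2) :=
        Real.sqrt_pos.mpr (by nlinarith [norm_nonneg pu])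
      have hyeq : (p.2 : EuclideanSpace ℝ (Fin (m + 1))) = q.2 := by
        rw [← hueq] at h2
        exact smul_right_injective _ (ne_of_gt hspos) h2
      have : p = q := Prod.ext (Subtype.ext hueq) (Subtype.ext hyeq)
      rw [this]
  -- compactness
  have hDc : IsCompact Dp := by
    rw [hDp]
    refine (isCompact_closedBall (0 : EuclideanSpace ℝ (Fin k)) 1).of_isClosed_subset ?_ ?_
    · have : {u : EuclideanSpace ℝ (Fin k) | ‖u‖ ≤ 1 ∧ 0 ≤ u last} =
          {u | ‖u‖ ≤ 1} ∩ {u | 0 ≤ u last} := rfl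
      rw [this]
      exact (isClosed_le continuous_norm continuous_const).inter
        (isClosed_le continuous_const (hcoord last))
    · exact fun u hu => mem_closedBall_zero_iff.mpr hu.1
  haveI : CompactSpace ↥Dp := isCompact_iff_compactSpace.mp hDc
  haveI : CompactSpace ↥Sm := isCompact_iff_compactSpace.mp (hSm ▸ isCompact_sphere 0 1)
  have hinjF : Function.Injective (Quot.lift g hresp) := by
    intro a b
    induction a using Quot.ind with
    | _ p =>
      induction b using Quot.ind with
      | _ q => exact hinj p q
  have hsurjF : Function.Surjective (Quot.lift g hresp) := by
    intro z
    obtain ⟨p, hp, -⟩ := hconstr z (mem_closedBall_zero_iff.mp z.2)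
    refine ⟨Quot.mk r p, ?_⟩
    show g p = z
    exact Subtype.ext hp
  have hce : Continuous ⇑(Equiv.ofBijective (Quot.lift g hresp) ⟨hinjF, hsurjF⟩) := by
    show Continuous (Quot.lift g hresp)
    exact continuous_quot_lift hresp hcg
  refine ⟨hce.homeoOfEquivCompactToT2, ?_, ?_⟩
  · intro p
    rfl
  have himg : Subtype.val '' ((hce.homeoOfEquivCompactToT2) '' (Quot.mk r ''
      {p : Dp × Sm | (p.1 : EuclideanSpace ℝ (Fin k)) last = 0})) =
      (fun p : Dp × Sm => f p.1 p.2) ''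
        {p : Dp × Sm | (p.1 : EuclideanSpace ℝ (Fin k)) last = 0} := by
    rw [← image_comp, ← image_comp]
    apply Set.image_congr
    intro p _
    rfl
  rw [himg]
  ext z
  constructor
  · rintro ⟨p, hp, rfl⟩
    rw [mem_sphere_iff_norm, sub_zero]
    have h := hnf _ _ (hp1 p) (hpy p)
    rw [hp] at h
    apply eq_of_sq_eq' (norm_nonneg _) zero_le_one
    rw [h]; norm_num
  · intro hz
    rw [mem_sphere_iff_norm, sub_zero] at hz
    obtain ⟨p, hp, hp2'⟩ := hconstr z (le_of_eq hz)
    refine ⟨p, ?_, hp⟩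
    show (p.1 : EuclideanSpace ℝ (Fin k)) last = 0
    have : ((p.1 : EuclideanSpace ℝ (Fin k)) last) ^ 2 = 0 := by rw [hp2', hz]; norm_num
    exact pow_eq_zero_iff (two_ne_zero).elim |>.mp this
end
end
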